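/- arXiv:2105.12516 — 2 statements merged into one kernel-verified Lean document; each statement's English description precedes it below -/
import Mathlib

section
/- Let n, m be positive integers, let K be an n×n real symmetric positive-definite matrix, let R be an invertible n×n real matrix with R Rᵀ = K, let Φ be an m×n real matrix, let y ∈ ℝᵐ, and let λ > 0. Define g^Reg := (ΦᵀΦ + λK⁻¹)⁻¹ Φᵀ y and assume g^Reg ≠ 0 and Φ g^Reg ≠ y. Set ρ := λ‖R⁻¹ g^Reg‖ / ‖Φ g^Reg − y‖. Then ρ > 0 and g^Reg is a global minimizer of the function g ↦ ‖Φg − y‖ + ρ‖R⁻¹ g‖ over ℝⁿ. -/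
open Matrix
open scoped BigOperators

/-- Euclidean norm of a real vector. -/
noncomputable def euclNorm {k : ℕ} (v : Fin k → ℝ) : ℝ :=
  Real.sqrt (∑ i, (v i) ^ 2)

lemma euclNorm_nonneg {k : ℕ} (v : Fin k → ℝ) : 0 ≤ euclNorm v :=
  Real.sqrt_nonneg _

lemma euclNorm_sq {k : ℕ} (v : Fin k → ℝ) : euclNorm v ^ 2 = v ⬝ᵥ v := by
  rw [euclNorm, Real.sq_sqrt (by positivity)]
  simp [dotProduct, sq]

lemma euclNorm_pos {k : ℕ} {v : Fin k → ℝ} (hv : v ≠ 0) : 0 < euclNorm v := by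
  rcases Function.ne_iff.mp hv with ⟨i, hi⟩
  refine Real.sqrt_pos.mpr ?_
  have h0 : (0:ℝ) < v i ^ 2 := sq_pos_of_ne_zero hi
  exact lt_of_lt_of_le h0 (Finset.single_le_sum (f := fun j => v j ^ 2)
    (fun j _ => sq_nonneg _) (Finset.mem_univ i))

lemma dot_le_norm_mul_norm {k : ℕ} (v w : Fin k → ℝ) :
    v ⬝ᵥ w ≤ euclNorm v * euclNorm w := by
  have h := Finset.sum_mul_sq_le_sq_mul_sq Finset.univ v w
  calc v ⬝ᵥ w ≤ |v ⬝ᵥ w| := le_abs_self _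
    _ = Real.sqrt ((∑ i, v i * w i) ^ 2) := by
        rw [Real.sqrt_sq_eq_abs]; rfl
    _ ≤ Real.sqrt ((∑ i, v i ^ 2) * ∑ i, w i ^ 2) := Real.sqrt_le_sqrt h
    _ = euclNorm v * euclNorm w := Real.sqrt_mul (by positivity) _

/-- Remark 1: with the explicit radius ρ = λ‖R⁻¹g^Reg‖/‖Φg^Reg − y‖, the
regularized estimate minimizes g ↦ ‖Φg − y‖ + ρ‖R⁻¹g‖. -/
theorem regLS_minimizes_with_explicit_rho
    (n m : ℕ) (hn : 0 < n) (hm : 0 < m)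
    (K R : Matrix (Fin n) (Fin n) ℝ) (hK : K.PosDef)
    (hR : IsUnit R.det) (hRK : R * Rᵀ = K)
    (Φ : Matrix (Fin m) (Fin n) ℝ) (y : Fin m → ℝ)
    (lam : ℝ) (hlam : 0 < lam)
    (gReg : Fin n → ℝ)
    (hgReg : gReg = (Φᵀ * Φ + lam • K⁻¹)⁻¹ *ᵥ (Φᵀ *ᵥ y))
    (hg0 : gReg ≠ 0) (hgy : Φ *ᵥ gReg ≠ y)
    (ρ : ℝ)
    (hρ : ρ = lam * euclNorm (R⁻¹ *ᵥ gReg) / euclNorm (Φ *ᵥ gReg - y)) :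
    0 < ρ ∧ ∀ g : Fin n → ℝ,
      euclNorm (Φ *ᵥ gReg - y) + ρ * euclNorm (R⁻¹ *ᵥ gReg) ≤
        euclNorm (Φ *ᵥ g - y) + ρ * euclNorm (R⁻¹ *ᵥ g) := by
  -- basic positivity facts
  have hKinv : (K⁻¹).PosDef := hK.inv
  have hM : (Φᵀ * Φ + lam • K⁻¹).PosDef := by
    have h1 : (Φᵀ * Φ).PosSemidef := by
      simpa using Matrix.posSemidef_conjTranspose_mul_self Φ
    have h2 : (lam • K⁻¹).PosDef := by
      have hherm : (lam • K⁻¹).IsHermitian := by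
        unfold Matrix.IsHermitian
        rw [Matrix.conjTranspose_smul, hKinv.1.eq]
        simp
      refine Matrix.PosDef.of_dotProduct_mulVec_pos hherm (fun x hx => ?_)
      rw [Matrix.smul_mulVec, dotProduct_smul, smul_eq_mul]
      exact mul_pos hlam (hKinv.dotProduct_mulVec_pos hx)
    exact Matrix.PosDef.posSemidef_add h1 h2
  have hMu : IsUnit (Φᵀ * Φ + lam • K⁻¹) := hM.isUnit
  -- normal equations: (ΦᵀΦ + lam K⁻¹) *ᵥ gReg = Φᵀ *ᵥ y
  have hnorm : (Φᵀ * Φ + lam • K⁻¹) *ᵥ gReg = Φᵀ *ᵥ y := by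
    rw [hgReg, Matrix.mulVec_mulVec, Matrix.mul_nonsing_inv _
      ((Matrix.isUnit_iff_isUnit_det _).mp hMu), Matrix.one_mulVec]
  -- key identity: Φᵀ *ᵥ (Φ *ᵥ gReg - y) + lam • (K⁻¹ *ᵥ gReg) = 0
  have hkey : Φᵀ *ᵥ (Φ *ᵥ gReg - y) + lam • (K⁻¹ *ᵥ gReg) = 0 := by
    have := hnorm
    rw [Matrix.add_mulVec, Matrix.smul_mulVec, ← Matrix.mulVec_mulVec] at this
    rw [Matrix.mulVec_sub]
    rw [sub_add_eq_add_sub, this]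
    simp
  -- R⁻ᵀ * R⁻¹ = K⁻¹
  have hRKinv : (R⁻¹)ᵀ * R⁻¹ = K⁻¹ := by
    rw [Matrix.transpose_nonsing_inv, ← Matrix.mul_inv_rev, hRK]
  set u₀ := Φ *ᵥ gReg - y with hu₀
  set w₀ := R⁻¹ *ᵥ gReg with hw₀
  have hw0ne : w₀ ≠ 0 := by
    intro h
    apply hg0
    have : R *ᵥ (R⁻¹ *ᵥ gReg) = R *ᵥ 0 := by rw [← hw₀, h]
    rwa [Matrix.mulVec_mulVec, Matrix.mul_nonsing_inv _ hR, Matrix.one_mulVec,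
      Matrix.mulVec_zero] at this
  have ha : 0 < euclNorm u₀ := euclNorm_pos (sub_ne_zero.mpr hgy)
  have hb : 0 < euclNorm w₀ := euclNorm_pos hw0ne
  set a := euclNorm u₀
  set b := euclNorm w₀
  have hρpos : 0 < ρ := by
    rw [hρ]
    exact div_pos (mul_pos hlam hb) ha
  refine ⟨hρpos, fun g => ?_⟩
  set u := Φ *ᵥ g - y with hu
  set w := R⁻¹ *ᵥ g with hw
  -- Cauchy–Schwarz lower bounds
  have hCS1 : u₀ ⬝ᵥ u ≤ a * euclNorm u := dot_le_norm_mul_norm u₀ u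
  have hCS2 : w₀ ⬝ᵥ w ≤ b * euclNorm w := dot_le_norm_mul_norm w₀ w
  -- the linear identity: u₀⬝u + lam * w₀⬝w = u₀⬝u₀ + lam * w₀⬝w₀
  have hlin : u₀ ⬝ᵥ u₀ + lam * (w₀ ⬝ᵥ w₀) = u₀ ⬝ᵥ u + lam * (w₀ ⬝ᵥ w) := by
    have hdot : ∀ z : Fin n → ℝ,
        u₀ ⬝ᵥ (Φ *ᵥ z) + lam * (w₀ ⬝ᵥ (R⁻¹ *ᵥ z)) = 0 := by
      intro z
      have h1 : u₀ ⬝ᵥ (Φ *ᵥ z) = (Φᵀ *ᵥ u₀) ⬝ᵥ z := by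
        rw [Matrix.dotProduct_mulVec, Matrix.mulVec_transpose]
      have h2a : (R⁻¹)ᵀ *ᵥ w₀ = K⁻¹ *ᵥ gReg := by
        rw [hw₀, Matrix.mulVec_mulVec, hRKinv]
      have h2 : w₀ ⬝ᵥ (R⁻¹ *ᵥ z) = (K⁻¹ *ᵥ gReg) ⬝ᵥ z := by
        rw [Matrix.dotProduct_mulVec, ← Matrix.mulVec_transpose, h2a]
      have hz : (Φᵀ *ᵥ u₀ + lam • (K⁻¹ *ᵥ gReg)) ⬝ᵥ z = 0 := by rw [hkey]; simp
      rw [add_dotProduct, smul_dotProduct, smul_eq_mul] at hz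
      rw [h1, h2]
      linarith
    have hgsub : ∀ z₁ z₂ : Fin n → ℝ, Φ *ᵥ z₁ - Φ *ᵥ z₂ = Φ *ᵥ (z₁ - z₂) := by
      intro z₁ z₂; rw [Matrix.mulVec_sub]
    have e1 : u - u₀ = Φ *ᵥ (g - gReg) := by
      rw [hu, hu₀]; rw [Matrix.mulVec_sub]; ring_nf
    have e2 : w - w₀ = R⁻¹ *ᵥ (g - gReg) := by
      rw [hw, hw₀, Matrix.mulVec_sub]
    have := hdot (g - gReg)
    rw [← e1, ← e2] at this
    have d1 : u₀ ⬝ᵥ (u - u₀) = u₀ ⬝ᵥ u - u₀ ⬝ᵥ u₀ := by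
      rw [dotProduct_sub]
    have d2 : w₀ ⬝ᵥ (w - w₀) = w₀ ⬝ᵥ w - w₀ ⬝ᵥ w₀ := by
      rw [dotProduct_sub]
    rw [d1, d2] at this
    nlinarith [this]
  -- finish: multiply target by a > 0
  have hρb : ρ = lam * b / a := hρ
  have hgoal : a * (a + ρ * b) ≤ a * (euclNorm u + ρ * euclNorm w) := by
    have hA : a * a = u₀ ⬝ᵥ u₀ := by
      have := euclNorm_sq u₀; nlinarith [this]
    have hB : b * b = w₀ ⬝ᵥ w₀ := by
      have := euclNorm_sq w₀; nlinarith [this]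
    have hρa : ρ * a = lam * b := by
      rw [hρb]; exact div_mul_cancel₀ _ (ne_of_gt ha)
    calc a * (a + ρ * b) = a * a + (ρ * a) * b := by ring
      _ = u₀ ⬝ᵥ u₀ + lam * (b * b) := by rw [hA, hρa]; ring
      _ = u₀ ⬝ᵥ u₀ + lam * (w₀ ⬝ᵥ w₀) := by rw [hB]
      _ = u₀ ⬝ᵥ u + lam * (w₀ ⬝ᵥ w) := hlin
      _ ≤ a * euclNorm u + lam * (b * euclNorm w) := by
          have := mul_le_mul_of_nonneg_left hCS2 (le_of_lt hlam)
          linarith [hCS1]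
      _ = a * euclNorm u + (ρ * a) * euclNorm w := by rw [hρa]; ring
      _ = a * (euclNorm u + ρ * euclNorm w) := by ring
  exact le_of_mul_le_mul_left hgoal ha
end

section
/- Let n, m be positive integers, let ρ > 0, let a ∈ ℝⁿ with a ≠ 0, let R be an invertible n×n real matrix, and let u ∈ ℝᵐ be a unit vector (‖u‖ = 1). Define Δ* := (ρ / ‖R⁻¹a‖) · u (R⁻¹a)ᵀ R⁻¹ ∈ ℝ^{m×n}. Then ‖Δ* R‖_F = ρ and ‖Δ* a‖ = ρ‖R⁻¹a‖; hence Δ* attains the supremum of ‖Δa‖ over {Δ ∈ ℝ^{m×n} : ‖ΔR‖_F ≤ ρ}. -/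
open Matrix
open scoped BigOperators

/-- Frobenius norm of a real matrix. -/
noncomputable def frobNorm {m n : ℕ} (A : Matrix (Fin m) (Fin n) ℝ) : ℝ :=
  Real.sqrt (∑ i, ∑ j, (A i j) ^ 2)

lemma sq_euclNorm {k : ℕ} (v : Fin k → ℝ) : euclNorm v ^ 2 = ∑ i, (v i) ^ 2 :=
  Real.sq_sqrt (Finset.sum_nonneg fun i _ => sq_nonneg _)

lemma euclNorm_smul {k : ℕ} (c : ℝ) (v : Fin k → ℝ) :
    euclNorm (c • v) = |c| * euclNorm v := by
  unfold euclNorm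
  rw [← Real.sqrt_sq_eq_abs, ← Real.sqrt_mul (sq_nonneg c), Finset.mul_sum]
  congr 1
  apply Finset.sum_congr rfl
  intro i _
  simp [mul_pow]

/-- Case b = 0 of Lemma 2: Δ* = (ρ/‖R⁻¹a‖) u (R⁻¹a)ᵀ R⁻¹ satisfies
‖Δ*R‖_F = ρ and ‖Δ*a‖ = ρ‖R⁻¹a‖, hence attains the supremum of ‖Δa‖ over
{Δ : ‖ΔR‖_F ≤ ρ}. -/
theorem robust_inner_problem_attained_b_zero
    (n m : ℕ) (hn : 0 < n) (hm : 0 < m)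
    (ρ : ℝ) (hρ : 0 < ρ)
    (a : Fin n → ℝ) (ha : a ≠ 0)
    (R : Matrix (Fin n) (Fin n) ℝ) (hR : IsUnit R.det)
    (u : Fin m → ℝ) (hu : euclNorm u = 1)
    (Δstar : Matrix (Fin m) (Fin n) ℝ)
    (hΔstar : Δstar =
      (ρ / euclNorm (R⁻¹ *ᵥ a)) • (vecMulVec u (R⁻¹ *ᵥ a) * R⁻¹)) :
    frobNorm (Δstar * R) = ρ ∧
      euclNorm (Δstar *ᵥ a) = ρ * euclNorm (R⁻¹ *ᵥ a) ∧
      ∀ Δ : Matrix (Fin m) (Fin n) ℝ, frobNorm (Δ * R) ≤ ρ →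
        euclNorm (Δ *ᵥ a) ≤ euclNorm (Δstar *ᵥ a) := by
  set w : Fin n → ℝ := R⁻¹ *ᵥ a with hwdef
  have hRw : R *ᵥ w = a := by
    rw [hwdef, mulVec_mulVec, mul_nonsing_inv R hR, one_mulVec]
  have hw : w ≠ 0 := by
    intro h
    apply ha
    rw [h, mulVec_zero] at hRw
    exact hRw.symm
  have hwpos : 0 < euclNorm w := euclNorm_pos hw
  set c : ℝ := ρ / euclNorm w with hc
  have hcpos : 0 < c := div_pos hρ hwpos
  have hsumu : ∑ i, (u i) ^ 2 = 1 := by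
    have h := sq_euclNorm u
    rw [hu] at h
    simpa using h.symm
  have hsumw : ∑ j, (w j) ^ 2 = euclNorm w ^ 2 := (sq_euclNorm w).symm
  -- Part 1
  have h1 : frobNorm (Δstar * R) = ρ := by
    have hDR : Δstar * R = c • vecMulVec u w := by
      rw [hΔstar, Matrix.smul_mul, Matrix.mul_assoc, nonsing_inv_mul R hR, Matrix.mul_one]
    rw [hDR, frobNorm]
    have hsum : ∑ i, ∑ j, ((c • vecMulVec u w) i j) ^ 2
        = c ^ 2 * ((∑ i, (u i) ^ 2) * (∑ j, (w j) ^ 2)) := by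
      rw [Finset.sum_mul_sum, Finset.mul_sum]
      apply Finset.sum_congr rfl
      intro i _
      rw [Finset.mul_sum]
      apply Finset.sum_congr rfl
      intro j _
      simp only [Matrix.smul_apply, vecMulVec_apply, smul_eq_mul]
      ring
    rw [hsum, hsumu, one_mul, hsumw, ← mul_pow,
      Real.sqrt_sq (by positivity : (0:ℝ) ≤ c * euclNorm w), hc]
    field_simp
  -- Part 2
  have hval : Δstar *ᵥ a = (c * euclNorm w ^ 2) • u := by
    rw [hΔstar, smul_mulVec, ← mulVec_mulVec, ← hwdef]
    funext i
    simp only [Pi.smul_apply, smul_eq_mul, mulVec, dotProduct, vecMulVec_apply]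
    rw [← hsumw]
    simp only [Finset.mul_sum, Finset.sum_mul]
    apply Finset.sum_congr rfl
    intro j _
    ring
  have h2 : euclNorm (Δstar *ᵥ a) = ρ * euclNorm w := by
    rw [hval, euclNorm_smul, hu, mul_one,
      abs_of_pos (by positivity : 0 < c * euclNorm w ^ 2), hc]
    field_simp
  refine ⟨h1, h2, ?_⟩
  intro Δ hΔ
  have hDa : Δ *ᵥ a = (Δ * R) *ᵥ w := by
    rw [← hRw, mulVec_mulVec]
  have key : euclNorm ((Δ * R) *ᵥ w) ≤ frobNorm (Δ * R) * euclNorm w := by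
    set B := Δ * R with hB
    have hbound : ∑ i, ((B *ᵥ w) i) ^ 2
        ≤ (∑ i, ∑ j, (B i j) ^ 2) * (∑ j, (w j) ^ 2) := by
      rw [Finset.sum_mul]
      apply Finset.sum_le_sum
      intro i _
      simpa [mulVec, dotProduct] using
        Finset.sum_mul_sq_le_sq_mul_sq Finset.univ (fun j => B i j) w
    calc euclNorm (B *ᵥ w)
        ≤ Real.sqrt ((∑ i, ∑ j, (B i j) ^ 2) * (∑ j, (w j) ^ 2)) :=
          Real.sqrt_le_sqrt hbound
      _ = frobNorm B * euclNorm w := by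
          rw [frobNorm, euclNorm]
          exact Real.sqrt_mul
            (Finset.sum_nonneg fun i _ => Finset.sum_nonneg fun j _ => sq_nonneg _) _
  rw [hDa, h2]
  calc euclNorm ((Δ * R) *ᵥ w) ≤ frobNorm (Δ * R) * euclNorm w := key
    _ ≤ ρ * euclNorm w := by
        apply mul_le_mul_of_nonneg_right hΔ hwpos.le
end
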